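/- For every t ≥ 1, there exists a signed graph Ĝ whose underlying graph has treewidth at most t such that the chromatic number of the strong exact-distance -2 graph of Ĝ is at least 2^t. -/

import Mathlib

open SimpleGraph

/-- The number of negative edges of a walk, where `σ e = true` means edge `e` is negative. -/
def negCount {V : Type} {G : SimpleGraph V} (σ : Sym2 V → Bool) {x y : V}
    (p : G.Walk x y) : ℕ :=
  (p.edges.filter (fun e => σ e)).length

/-- A walk is negative if it contains an odd number of negative edges. -/
def IsNegWalk {V : Type} {G : SimpleGraph V} (σ : Sym2 V → Bool) {x y : V}
    (p : G.Walk x y) : Prop :=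
  Odd (negCount σ p)

/-- The exact-distance `-k` graph of the signed graph `(G, σ)`:
`xy` is an edge iff `d_G(x,y) = k` and every `xy`-path of length `k` is negative. -/
def exactDistNeg {V : Type} (G : SimpleGraph V) (σ : Sym2 V → Bool) (k : ℕ) :
    SimpleGraph V :=
  SimpleGraph.fromRel (fun x y =>
    G.dist x y = k ∧ ∀ p : G.Walk x y, p.IsPath → p.length = k → IsNegWalk σ p)

/-- The strong exact-distance `-k` graph of the signed graph `(G, σ)`:
`xy` is an edge iff `d_G(x,y) = k` and some `xy`-path of length `k` is negative. -/
def strongExactDistNeg {V : Type} (G : SimpleGraph V) (σ : Sym2 V → Bool) (k : ℕ) :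
    SimpleGraph V :=
  SimpleGraph.fromRel (fun x y =>
    G.dist x y = k ∧ ∃ p : G.Walk x y, p.IsPath ∧ p.length = k ∧ IsNegWalk σ p)

/-- `WReach G L k y` : the set of vertices weakly `k`-reachable from `y` w.r.t. ordering `L`. -/
def WReach {V : Type} (G : SimpleGraph V) (L : LinearOrder V) (k : ℕ) (y : V) : Set V :=
  {x | ∃ p : G.Walk x y, p.IsPath ∧ p.length ≤ k ∧ ∀ z ∈ p.support, L.le x z}

/-- The weak `k`-colouring number of `G`. -/
noncomputable def wcol {V : Type} (G : SimpleGraph V) (k : ℕ) : ℕ :=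
  ⨅ L : LinearOrder V, ⨆ y : V, (WReach G L k y).ncard

/-- `DReach G L k y` : the set of vertices `x` such that there is an `xy`-path
`z_0, …, z_s` (`x = z_0`, `y = z_s`) of length `s ≤ k` on which `x` is the `L`-minimum
and `y ≤_L z_i` for all `⌊k/2⌋ + 1 ≤ i ≤ s`. -/
def DReach {V : Type} (G : SimpleGraph V) (L : LinearOrder V) (k : ℕ) (y : V) : Set V :=
  {x | ∃ p : G.Walk x y, p.IsPath ∧ p.length ≤ k ∧ (∀ z ∈ p.support, L.le x z) ∧
        ∀ i, k / 2 + 1 ≤ i → i ≤ p.length → L.le y (p.support.getD i y)}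

/-- The distance-`k`-colouring number of `G`. -/
noncomputable def dcol {V : Type} (G : SimpleGraph V) (k : ℕ) : ℕ :=
  ⨅ L : LinearOrder V, ⨆ y : V, (DReach G L k y).ncard

/-- `SReach G L k y` : the set of vertices strongly `k`-reachable from `y` w.r.t. `L`. -/
def SReach {V : Type} (G : SimpleGraph V) (L : LinearOrder V) (k : ℕ) (y : V) : Set V :=
  {x | ∃ p : G.Walk x y, p.IsPath ∧ p.length ≤ k ∧ (∀ z ∈ p.support, L.le x z) ∧
        ∀ z ∈ p.support, z ≠ x → L.le y z}

/-- The strong `k`-colouring number of `G`. -/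
noncomputable def scol {V : Type} (G : SimpleGraph V) (k : ℕ) : ℕ :=
  ⨅ L : LinearOrder V, ⨆ y : V, (SReach G L k y).ncard

/-- `H` is a minor of `G` (branch-set definition). -/
def IsMinor {W V : Type} (H : SimpleGraph W) (G : SimpleGraph V) : Prop :=
  ∃ B : W → Set V,
    (∀ w, (B w).Nonempty) ∧
    (∀ w, (G.induce (B w)).Connected) ∧
    (Pairwise (Function.onFun Disjoint B)) ∧
    ∀ w w', H.Adj w w' → ∃ u ∈ B w, ∃ v ∈ B w', G.Adj u v

/-- `G` is planar iff it has no `K₅` and no `K₃,₃` minor (Wagner's theorem). -/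
def IsPlanar {V : Type} (G : SimpleGraph V) : Prop :=
  ¬ IsMinor (completeGraph (Fin 5)) G ∧
  ¬ IsMinor (completeBipartiteGraph (Fin 3) (Fin 3)) G

/-- `G` is outerplanar iff it has no `K₄` and no `K₂,₃` minor. -/
def IsOuterplanar {V : Type} (G : SimpleGraph V) : Prop :=
  ¬ IsMinor (completeGraph (Fin 4)) G ∧
  ¬ IsMinor (completeBipartiteGraph (Fin 2) (Fin 3)) G

/-- `G` has treewidth at most `t` (tree-decomposition definition). -/
def HasTreewidthLE {V : Type} (G : SimpleGraph V) (t : ℕ) : Prop :=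
  ∃ (ι : Type) (T : SimpleGraph ι) (B : ι → Finset V),
    T.Connected ∧ T.IsAcyclic ∧
    (∀ v, ∃ i, v ∈ B i) ∧
    (∀ u v, G.Adj u v → ∃ i, u ∈ B i ∧ v ∈ B i) ∧
    (∀ v, (T.induce {i | v ∈ B i}).Connected) ∧
    (∀ i, (B i).card ≤ t + 1)

section Aux

/-- Vertex type: a clique `Fin t` plus an independent set of sign patterns. -/
abbrev MyV (t : ℕ) : Type := Fin t ⊕ (Fin t → Bool)

/-- The underlying graph: clique on the left, each right vertex joined to all left ones. -/
def myG (t : ℕ) : SimpleGraph (MyV t) :=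
  SimpleGraph.fromRel (fun x _ => x.isLeft = true)

/-- The signature: the edge from `inr f` to `inl i` has sign `f i`. -/
def mySigma (t : ℕ) : Sym2 (MyV t) → Bool :=
  Sym2.lift ⟨fun x y =>
    match x, y with
    | Sum.inl i, Sum.inr f => f i
    | Sum.inr f, Sum.inl i => f i
    | _, _ => false,
    by rintro (i | f) (j | g) <;> rfl⟩

lemma mySigma_lr {t : ℕ} (i : Fin t) (f : Fin t → Bool) :
    mySigma t s(Sum.inl i, Sum.inr f) = f i := rfl

lemma mySigma_rl {t : ℕ} (i : Fin t) (f : Fin t → Bool) :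
    mySigma t s(Sum.inr f, Sum.inl i) = f i := rfl

lemma myG_adj_lr {t : ℕ} (i : Fin t) (f : Fin t → Bool) :
    (myG t).Adj (Sum.inl i) (Sum.inr f) := by
  rw [myG, SimpleGraph.fromRel_adj]
  exact ⟨by simp, Or.inl rfl⟩

lemma myG_not_adj_rr {t : ℕ} (f g : Fin t → Bool) :
    ¬ (myG t).Adj (Sum.inr f) (Sum.inr g) := by
  rw [myG, SimpleGraph.fromRel_adj]
  rintro ⟨-, h | h⟩ <;> simp at h

/-- The star graph used as the tree of the decomposition. -/
def myT (ι : Type) : SimpleGraph (Option ι) :=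
  SimpleGraph.fromRel (fun a _ => a = none)

lemma myT_adj_some_none {ι : Type} (x : ι) : (myT ι).Adj (some x) none := by
  rw [myT, SimpleGraph.fromRel_adj]
  exact ⟨by simp, Or.inr rfl⟩

lemma myT_connected (ι : Type) : (myT ι).Connected := by
  rw [SimpleGraph.connected_iff]
  refine ⟨?_, ⟨none⟩⟩
  have key : ∀ a : Option ι, (myT ι).Reachable a none := by
    rintro (_ | x)
    · exact SimpleGraph.Reachable.refl _
    · exact (myT_adj_some_none x).reachable
  intro a b
  exact (key a).trans (key b).symm

lemma myT_bridge {ι : Type} (x : ι) : (myT ι).IsBridge s(some x, none) := by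
  rw [SimpleGraph.isBridge_iff]
  rintro ⟨p⟩
  cases p with
  | cons h q =>
    rw [SimpleGraph.deleteEdges_adj, myT, SimpleGraph.fromRel_adj] at h
    obtain ⟨⟨hne, h1 | h1⟩, hF⟩ := h
    · exact (Option.some_ne_none x) h1
    · subst h1
      exact hF (Set.mem_singleton _)

lemma myT_acyclic (ι : Type) : (myT ι).IsAcyclic := by
  rw [SimpleGraph.isAcyclic_iff_forall_adj_isBridge]
  intro v w h
  have h' := h
  rw [myT, SimpleGraph.fromRel_adj] at h'
  obtain ⟨hne, h1 | h1⟩ := h'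
  · subst h1
    cases w with
    | none => exact absurd rfl hne
    | some y => rw [Sym2.eq_swap]; exact myT_bridge y
  · subst h1
    cases v with
    | none => exact absurd rfl hne
    | some y => exact myT_bridge y

lemma induce_singleton_connected {V : Type} (G : SimpleGraph V) (a : V) :
    (G.induce {a}).Connected := by
  rw [SimpleGraph.connected_iff]
  refine ⟨?_, ⟨⟨a, rfl⟩⟩⟩
  intro u v
  have : u = v := Subtype.ext ((Set.mem_singleton_iff.mp u.2).trans
    (Set.mem_singleton_iff.mp v.2).symm)
  rw [this]

end Aux

def myB (t : ℕ) : Option (Fin t → Bool) → Finset (MyV t)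
  | none => Finset.univ.image Sum.inl
  | some f => insert (Sum.inr f) (Finset.univ.image Sum.inl)

lemma inl_mem_myB {t : ℕ} (j : Fin t) (i : Option (Fin t → Bool)) :
    Sum.inl j ∈ myB t i := by
  cases i with
  | none => simp [myB]
  | some f => simp [myB]

lemma inr_mem_myB_iff {t : ℕ} (f : Fin t → Bool) (i : Option (Fin t → Bool)) :
    Sum.inr f ∈ myB t i ↔ i = some f := by
  cases i with
  | none => simp [myB]
  | some g =>
    simp only [myB, Finset.mem_insert, Finset.mem_image]
    constructor
    · rintro (h | ⟨j, -, h⟩)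
      · rw [Sum.inr.injEq] at h; rw [h]
      · exact absurd h (by simp)
    · rintro h; rw [Option.some.injEq] at h; exact Or.inl (by rw [h])

lemma myG_treewidth (t : ℕ) : HasTreewidthLE (myG t) t := by
  refine ⟨Option (Fin t → Bool), myT _, myB t, myT_connected _, myT_acyclic _, ?_, ?_, ?_, ?_⟩
  · rintro (j | f)
    · exact ⟨none, inl_mem_myB j none⟩
    · exact ⟨some f, (inr_mem_myB_iff f _).mpr rfl⟩
  · rintro (j | f) (k | g) h
    · exact ⟨none, inl_mem_myB j none, inl_mem_myB k none⟩
    · exact ⟨some g, inl_mem_myB j _, (inr_mem_myB_iff g _).mpr rfl⟩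
    · exact ⟨some f, (inr_mem_myB_iff f _).mpr rfl, inl_mem_myB k _⟩
    · exact absurd h (myG_not_adj_rr f g)
  · rintro (j | f)
    · have hset : {i | Sum.inl j ∈ myB t i} = Set.univ := by
        ext i; simp [inl_mem_myB j i]
      rw [hset]
      exact ((myT (Fin t → Bool)).induceUnivIso).connected_iff.mpr (myT_connected _)
    · have hset : {i | Sum.inr f ∈ myB t i} = {some f} := by
        ext i; simp [inr_mem_myB_iff f i]
      rw [hset]
      exact induce_singleton_connected _ _
  · have h1 : (Finset.univ.image (Sum.inl : Fin t → MyV t)).card ≤ t := by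
      refine le_trans Finset.card_image_le ?_
      simp
    intro i
    cases i with
    | none => exact le_trans h1 (Nat.le_succ t)
    | some f =>
      exact le_trans (Finset.card_insert_le _ _) (Nat.add_le_add_right h1 1)

lemma myClique (t : ℕ) :
    (strongExactDistNeg (myG t) (mySigma t) 2).IsClique
      (↑(Finset.univ.image (Sum.inr : (Fin t → Bool) → MyV t)) : Set (MyV t)) := by
  intro x hx y hy hne
  simp only [Finset.coe_image, Finset.coe_univ, Set.image_univ, Set.mem_range] at hx hy
  obtain ⟨f, rfl⟩ := hx
  obtain ⟨g, rfl⟩ := hy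
  have hfg : f ≠ g := fun h => hne (by rw [h])
  obtain ⟨i0, hi0⟩ := Function.ne_iff.mp hfg
  -- the length-2 walk through i0
  have h1 : (myG t).Adj (Sum.inr f) (Sum.inl i0) := (myG_adj_lr i0 f).symm
  have h2 : (myG t).Adj (Sum.inl i0) (Sum.inr g) := myG_adj_lr i0 g
  set w : (myG t).Walk (Sum.inr f) (Sum.inr g) :=
    SimpleGraph.Walk.cons h1 (SimpleGraph.Walk.cons h2 SimpleGraph.Walk.nil) with hw
  have hwlen : w.length = 2 := rfl
  have hdist : (myG t).dist (Sum.inr f) (Sum.inr g) = 2 := by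
    have hle : (myG t).dist (Sum.inr f) (Sum.inr g) ≤ 2 := hwlen ▸ SimpleGraph.dist_le w
    have hne0 : (myG t).dist (Sum.inr f) (Sum.inr g) ≠ 0 := by
      rw [Ne, SimpleGraph.dist_eq_zero_iff_eq_or_not_reachable]
      push_neg
      exact ⟨hne, ⟨w⟩⟩
    have hne1 : (myG t).dist (Sum.inr f) (Sum.inr g) ≠ 1 := by
      rw [Ne, SimpleGraph.dist_eq_one_iff_adj]
      exact myG_not_adj_rr f g
    omega
  have hpath : w.IsPath := by
    rw [SimpleGraph.Walk.isPath_def]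
    simp [hw, hfg]
  have hneg : IsNegWalk (mySigma t) w := by
    have hedges : w.edges = [s(Sum.inr f, Sum.inl i0), s(Sum.inl i0, Sum.inr g)] := rfl
    rw [IsNegWalk, negCount, hedges]
    cases hf : f i0 <;> cases hg : g i0 <;>
      simp [mySigma_lr, mySigma_rl, hf, hg] at hi0 ⊢
  rw [strongExactDistNeg, SimpleGraph.fromRel_adj]
  exact ⟨hne, Or.inl ⟨hdist, w, hpath, rfl, hneg⟩⟩

theorem exists_treewidth_t_strongExactDistNeg_chromatic_ge_two_pow
    (t : ℕ) (ht : 1 ≤ t) :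
    ∃ (V : Type) (_ : Fintype V) (G : SimpleGraph V) (σ : Sym2 V → Bool),
      HasTreewidthLE G t ∧
      ((2 ^ t : ℕ) : ℕ∞) ≤ (strongExactDistNeg G σ 2).chromaticNumber := by
  refine ⟨MyV t, inferInstance, myG t, mySigma t, myG_treewidth t, ?_⟩
  have h := (myClique t).card_le_chromaticNumber
  have hcard : (Finset.univ.image (Sum.inr : (Fin t → Bool) → MyV t)).card = 2 ^ t := by
    rw [Finset.card_image_of_injective _ Sum.inr_injective]
    simp
  rwa [hcard] at h
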